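/- Let (𝔥_1 ⊕ 𝔥_0; 𝔩_1, 𝔩_2) be a strict Lie 2-algebra, M a manifold, and (A,B) with A ∈ Ω^1(M,𝔥_0), B ∈ Ω^2(M,𝔥_1). On the graded vector bundle (M×𝔥_1) ⊕ (TM ⊕ (M×𝔥_0)), define ρ = pr_{TM}, l_1(m) = 𝔩_1(m), l_2(X+u, Y+v) = [X,Y] + L_X v + 𝔩_2(A(X),v) − L_Y u − 𝔩_2(A(Y),u) + fcurv(A,B)(X,Y) + 𝔩_2(u,v), l_2(X+u, m) = L_X m + 𝔩_2(A(X),m) + 𝔩_2(u,m), and l_3(X+u,Y+v,Z+w) = −curv(A,B)(X,Y,Z) + 𝔩_2(B(X,Y),w) + 𝔩_2(B(Y,Z),u) + 𝔩_2(B(Z,X),v). Then this is a transitive Lie 2-algebroid. -/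
import Mathlib


/-- the graded bundle `(M×𝔥₁) ⊕ (TM ⊕ (M×𝔥₀))` with the structure maps
induced by a `Γ`-connection `(A,B)` is a transitive Lie 2-algebroid: the equations
characterizing a transitive Lie 2-algebroid (Theorem 3.3 of the paper) hold for
`∇⁰_X u = L_X u + 𝔩₂(A(X),u)`, `∇¹_X m = L_X m + 𝔩₂(A(X),m)`, `R_γ = −fcurv(A,B)`,
`I_γ = curv(A,B)`, `J(X,Y,w) = −𝔩₂(B(X,Y),w)`, `K = 0`, `𝔩₃ = 0`. -/
theorem gamma_connection_transitive_lie_2_algebroid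
    (V H0 H1 : Type) [LieRing V] [Module ℝ V]
    [AddCommGroup H0] [Module ℝ H0] [AddCommGroup H1] [Module ℝ H1]
    (L0 : V → H0 →ₗ[ℝ] H0) (L1 : V → H1 →ₗ[ℝ] H1)
    (hL0 : ∀ (X Y : V) (a : H0), L0 ⁅X, Y⁆ a = L0 X (L0 Y a) - L0 Y (L0 X a))
    (hL1 : ∀ (X Y : V) (m : H1), L1 ⁅X, Y⁆ m = L1 X (L1 Y m) - L1 Y (L1 X m))
    -- the strict Lie 2-algebra (𝔥₁ ⊕ 𝔥₀; 𝔩₁, 𝔩₂)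
    (l1 : H1 →ₗ[ℝ] H0) (l2 : H0 →ₗ[ℝ] H0 →ₗ[ℝ] H0) (l2m : H0 →ₗ[ℝ] H1 →ₗ[ℝ] H1)
    (hl2skew : ∀ a b : H0, l2 a b = - l2 b a)
    (hchain1 : ∀ (a : H0) (m : H1), l1 (l2m a m) = l2 a (l1 m))
    (hchain2 : ∀ m p : H1, l2m (l1 m) p = - l2m (l1 p) m)
    (hjac0 : ∀ a b c : H0, l2 a (l2 b c) = l2 (l2 a b) c + l2 b (l2 a c))
    (hjacm : ∀ (a b : H0) (m : H1), l2m a (l2m b m) = l2m (l2 a b) m + l2m b (l2m a m))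
    (hder0 : ∀ (X : V) (a b : H0), L0 X (l2 a b) = l2 (L0 X a) b + l2 a (L0 X b))
    (hder1 : ∀ (X : V) (a : H0) (m : H1), L1 X (l2m a m) = l2m (L0 X a) m + l2m a (L1 X m))
    (hcomm : ∀ (X : V) (m : H1), L0 X (l1 m) = l1 (L1 X m))
    -- the Γ-connection (A, B)
    (A : V →ₗ[ℝ] H0) (B : V →ₗ[ℝ] V →ₗ[ℝ] H1)
    (hBskew : ∀ X Y : V, B X Y = - B Y X)
    -- the structure maps of the split transitive Lie 2-algebroid
    (nab0 : V → H0 → H0)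
    (hnab0 : ∀ (X : V) (u : H0), nab0 X u = L0 X u + l2 (A X) u)
    (nab1 : V → H1 → H1)
    (hnab1 : ∀ (X : V) (m : H1), nab1 X m = L1 X m + l2m (A X) m)
    -- R_γ = −fcurv(A,B)
    (Rg : V → V → H0)
    (hRg : ∀ X Y : V, Rg X Y =
      - (L0 X (A Y) - L0 Y (A X) - A ⁅X, Y⁆) - l2 (A X) (A Y) + l1 (B X Y))
    -- I_γ = curv(A,B)
    (Ig : V → V → V → H1)
    (hIg : ∀ X Y Z : V, Ig X Y Z =
      L1 X (B Y Z) - L1 Y (B X Z) + L1 Z (B X Y)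
        - B ⁅X, Y⁆ Z + B ⁅X, Z⁆ Y - B ⁅Y, Z⁆ X
        + l2m (A X) (B Y Z) - l2m (A Y) (B X Z) + l2m (A Z) (B X Y))
    -- J(X,Y,w) = −𝔩₂(B(X,Y), w) = 𝔩₂(w, B(X,Y))
    (JF : V → V → H0 → H1)
    (hJF : ∀ (X Y : V) (w : H0), JF X Y w = l2m w (B X Y)) :
    -- (3.1): 𝔩₁ ∘ ∇¹ = ∇⁰ ∘ 𝔩₁
    (∀ (X : V) (m : H1), l1 (nab1 X m) = nab0 X (l1 m)) ∧
    -- (3.2): ∇⁰ is a derivation of 𝔩₂ (K = 0)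
    (∀ (X : V) (v w : H0), nab0 X (l2 v w) = l2 (nab0 X v) w + l2 v (nab0 X w)) ∧
    -- (3.3): ∇¹ is a derivation of the mixed 𝔩₂ (K = 0)
    (∀ (X : V) (v : H0) (m : H1),
      nab1 X (l2m v m) = l2m (nab0 X v) m + l2m v (nab1 X m)) ∧
    -- (3.5): curvature identity for ∇⁰
    (∀ (X Y : V) (w : H0),
      nab0 X (nab0 Y w) - nab0 Y (nab0 X w) - nab0 ⁅X, Y⁆ w
        + l2 (Rg X Y) w + l1 (JF X Y w) = 0) ∧
    -- (3.6): curvature identity for ∇¹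
    (∀ (X Y : V) (m : H1),
      nab1 X (nab1 Y m) - nab1 Y (nab1 X m) - nab1 ⁅X, Y⁆ m
        + l2m (Rg X Y) m + JF X Y (l1 m) = 0) ∧
    -- (3.7): Bianchi identity d_{∇⁰}R_γ = 𝔩₁ I_γ
    (∀ X Y Z : V,
      nab0 X (Rg Y Z) - nab0 Y (Rg X Z) + nab0 Z (Rg X Y)
        - Rg ⁅X, Y⁆ Z + Rg ⁅X, Z⁆ Y - Rg ⁅Y, Z⁆ X = l1 (Ig X Y Z)) ∧
    -- (3.8): the J-compatibility condition (K = 0)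
    (∀ (u : H0) (X Y Z : V),
      l2m u (Ig X Y Z)
        - nab1 X (JF Y Z u) + nab1 Y (JF X Z u) - nab1 Z (JF X Y u)
        + JF Y Z (nab0 X u) - JF X Z (nab0 Y u) + JF X Y (nab0 Z u)
        + JF ⁅X, Y⁆ Z u + JF ⁅Z, X⁆ Y u + JF ⁅Y, Z⁆ X u = 0) ∧
    -- (3.9): d_{∇¹}I_γ + J∘R_γ = 0
    (∀ x1 x2 x3 x4 : V,
      (nab1 x1 (Ig x2 x3 x4) - nab1 x2 (Ig x1 x3 x4)
          + nab1 x3 (Ig x1 x2 x4) - nab1 x4 (Ig x1 x2 x3)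
          - Ig ⁅x1, x2⁆ x3 x4 + Ig ⁅x1, x3⁆ x2 x4 - Ig ⁅x1, x4⁆ x2 x3
          - Ig ⁅x2, x3⁆ x1 x4 + Ig ⁅x2, x4⁆ x1 x3 - Ig ⁅x3, x4⁆ x1 x2)
        + (JF x3 x4 (Rg x1 x2) - JF x2 x4 (Rg x1 x3) + JF x2 x3 (Rg x1 x4)
            + JF x1 x4 (Rg x2 x3) - JF x1 x3 (Rg x2 x4) + JF x1 x2 (Rg x3 x4)) = 0) := by

  refine ⟨?_, ?_, ?_, ?_, ?_, ?_, ?_, ?_⟩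
  · intro X m
    simp [hnab0, hnab1, hchain1, hcomm]
  · intro X v w
    simp [hnab0, hder0, hjac0 (A X) v w, map_add, LinearMap.add_apply]
    abel
  · intro X v m
    simp [hnab0, hnab1, hder1, hjacm (A X) v m, map_add, LinearMap.add_apply]
    abel
  · intro X Y w
    simp only [hnab0, hRg, hJF, map_add, map_sub, map_neg, LinearMap.add_apply,
      LinearMap.sub_apply, LinearMap.neg_apply, hder0, hL0, hchain1, hcomm,
      hjac0 (A X) (A Y) w, hl2skew w (l1 (B X Y))]
    abel
  · intro X Y m
    simp only [hnab0, hnab1, hRg, hJF, map_add, map_sub, map_neg, LinearMap.add_apply,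
      LinearMap.sub_apply, LinearMap.neg_apply, hder1, hL1, hchain1,
      hjacm (A X) (A Y) m, hchain2 m (B X Y)]
    abel
  · intro X Y Z
    simp only [hnab0, hRg, hIg, map_add, map_sub, map_neg, LinearMap.add_apply,
      LinearMap.sub_apply, LinearMap.neg_apply, hder0, hL0, hchain1, hcomm, lie_lie,
      hjac0 (A X) (A Y) (A Z), hl2skew (A Z) (l2 (A X) (A Y)),
      hl2skew (A ⁅Y, Z⁆) (A X), hl2skew (A Y) (A ⁅X, Z⁆), hl2skew (A Z) (A ⁅X, Y⁆),
      hl2skew (L0 X (A Y)) (A Z), hl2skew (L0 Y (A X)) (A Z), hl2skew (L0 Z (A X)) (A Y),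
      show (⁅Z, Y⁆ : V) = -⁅Y, Z⁆ from (lie_skew Z Y).symm,
      show (⁅Z, X⁆ : V) = -⁅X, Z⁆ from (lie_skew Z X).symm,
      show (⁅Y, X⁆ : V) = -⁅X, Y⁆ from (lie_skew Y X).symm,
      show (⁅Z, ⁅X, Y⁆⁆ : V) = -(⁅X, ⁅Y, Z⁆⁆ - ⁅Y, ⁅X, Z⁆⁆) by rw [← lie_skew, lie_lie],
      lie_neg, neg_lie]
    abel
  · intro u X Y Z
    simp only [hnab0, hnab1, hIg, hJF, map_add, map_sub, map_neg, LinearMap.add_apply,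
      LinearMap.sub_apply, LinearMap.neg_apply, hder1,
      hjacm (A X) u (B Y Z), hjacm (A Y) u (B X Z), hjacm (A Z) u (B X Y),
      show (⁅Z, X⁆ : V) = -⁅X, Z⁆ from (lie_skew Z X).symm]
    abel
  · intro x1 x2 x3 x4
    simp only [hnab1, hRg, hIg, hJF, map_add, map_sub, map_neg, LinearMap.add_apply,
      LinearMap.sub_apply, LinearMap.neg_apply, hder1, hL1, lie_lie,
      hjacm (A x1) (A x2) (B x3 x4), hjacm (A x1) (A x3) (B x2 x4),
      hjacm (A x1) (A x4) (B x2 x3), hjacm (A x2) (A x3) (B x1 x4),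
      hjacm (A x2) (A x4) (B x1 x3), hjacm (A x3) (A x4) (B x1 x2),
      hchain2 (B x1 x2) (B x3 x4), hchain2 (B x1 x3) (B x2 x4),
      hchain2 (B x1 x4) (B x2 x3),
      hBskew ⁅x3, x4⁆ ⁅x1, x2⁆, hBskew ⁅x2, x4⁆ ⁅x1, x3⁆, hBskew ⁅x2, x3⁆ ⁅x1, x4⁆,
      show (⁅x2, x1⁆ : V) = -⁅x1, x2⁆ from (lie_skew x2 x1).symm,
      show (⁅x3, x1⁆ : V) = -⁅x1, x3⁆ from (lie_skew x3 x1).symm,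
      show (⁅x4, x1⁆ : V) = -⁅x1, x4⁆ from (lie_skew x4 x1).symm,
      show (⁅x3, x2⁆ : V) = -⁅x2, x3⁆ from (lie_skew x3 x2).symm,
      show (⁅x4, x2⁆ : V) = -⁅x2, x4⁆ from (lie_skew x4 x2).symm,
      show (⁅x4, x3⁆ : V) = -⁅x3, x4⁆ from (lie_skew x4 x3).symm,
      show (⁅x3, ⁅x1, x2⁆⁆ : V) = -(⁅x1, ⁅x2, x3⁆⁆ - ⁅x2, ⁅x1, x3⁆⁆) by
        rw [← lie_skew, lie_lie],
      show (⁅x4, ⁅x1, x2⁆⁆ : V) = -(⁅x1, ⁅x2, x4⁆⁆ - ⁅x2, ⁅x1, x4⁆⁆) by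
        rw [← lie_skew, lie_lie],
      show (⁅x4, ⁅x1, x3⁆⁆ : V) = -(⁅x1, ⁅x3, x4⁆⁆ - ⁅x3, ⁅x1, x4⁆⁆) by
        rw [← lie_skew, lie_lie],
      show (⁅x4, ⁅x2, x3⁆⁆ : V) = -(⁅x2, ⁅x3, x4⁆⁆ - ⁅x3, ⁅x2, x4⁆⁆) by
        rw [← lie_skew, lie_lie],
      lie_neg, neg_lie]
    abel
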